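/- Let n ≥ 4 be an even natural number and let G be a simple graph on Fin n. Suppose C is a finite set of vertices with C.card = n/2 that is a vertex cover of G (for all u, w, if G.Adj u w then u ∈ C or w ∈ C). Then there exist probability vectors p₁, p₂ on Fin n such that: (i) for every vertex v, (n/(n−2)) * (1 − p₁ v) * (1 − p₂ v) = 1; and (ii) for all u, w with G.Adj u w, (n/(n−2)) * (1 − p₁ u − p₁ w) ≤ 1. -/

import Mathlib

/-- Core of Lemma A.1 (first_half_hardness): given a balanced vertex cover
of size `n/2`, Players 1 and 2 have mixed strategies making every vertex move
worth exactly 1 and every edge move worth at most 1 to Player 3. -/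
theorem balanced_cover_gives_strategies (n : ℕ) (hn : 4 ≤ n) (heven : Even n)
    (G : SimpleGraph (Fin n)) (C : Finset (Fin n))
    (hCcard : C.card = n / 2)
    (hcover : ∀ u w, G.Adj u w → u ∈ C ∨ w ∈ C) :
    ∃ p₁ p₂ : Fin n → ℝ,
      (∀ i, 0 ≤ p₁ i) ∧ (∑ i, p₁ i = 1) ∧
      (∀ i, 0 ≤ p₂ i) ∧ (∑ i, p₂ i = 1) ∧
      (∀ v, (n : ℝ) / ((n : ℝ) - 2) * (1 - p₁ v) * (1 - p₂ v) = 1) ∧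
      (∀ u w, G.Adj u w → (n : ℝ) / ((n : ℝ) - 2) * (1 - p₁ u - p₁ w) ≤ 1) := by
  have hn0 : (0:ℝ) < n := by positivity
  have hn2 : (0:ℝ) < (n:ℝ) - 2 := by
    have : (4:ℝ) ≤ n := by exact_mod_cast hn
    linarith
  obtain ⟨m, hm⟩ := heven
  have hmn : n = 2 * m := by omega
  have hCm : C.card = m := by omega
  have hm0 : 0 < m := by omega
  refine ⟨fun i => if i ∈ C then 2 / n else 0,
          fun i => if i ∈ C then 0 else 2 / n, ?_, ?_, ?_, ?_, ?_, ?_⟩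
  · intro i; dsimp only; split <;> positivity
  · rw [Finset.sum_ite_mem, Finset.univ_inter, Finset.sum_const, hCm, nsmul_eq_mul]
    rw [hmn]; push_cast; field_simp
  · intro i; dsimp only; split <;> positivity
  · have hcc : (Finset.univ \ C).card = m := by
      rw [Finset.card_sdiff_of_subset (Finset.subset_univ C), Finset.card_univ, Fintype.card_fin, hCm]
      omega
    have : ∑ i, (if i ∈ C then (0:ℝ) else 2 / (n:ℝ)) = ∑ i ∈ Finset.univ \ C, 2 / (n:ℝ) := by
      rw [Finset.sum_ite, Finset.sum_const_zero, zero_add]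
      congr 1
      ext x; simp
    rw [this, Finset.sum_const, hcc, nsmul_eq_mul, hmn]; push_cast; field_simp
  · intro v
    dsimp only
    by_cases hv : v ∈ C <;> simp only [hv, if_true, if_false] <;> field_simp <;> norm_num
  · intro u w huw
    have h2n : (0:ℝ) ≤ 2 / n := by positivity
    have key : 2 / (n:ℝ) ≤ (if u ∈ C then 2 / (n:ℝ) else 0) + (if w ∈ C then 2 / (n:ℝ) else 0) := by
      have hu : (0:ℝ) ≤ (if u ∈ C then 2 / (n:ℝ) else 0) := by split <;> positivity
      have hw : (0:ℝ) ≤ (if w ∈ C then 2 / (n:ℝ) else 0) := by split <;> positivity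
      rcases hcover u w huw with h | h <;> rw [if_pos h] <;> linarith
    have : (n:ℝ) / ((n:ℝ) - 2) * (1 - (if u ∈ C then 2 / (n:ℝ) else 0) - (if w ∈ C then 2 / (n:ℝ) else 0))
        ≤ (n:ℝ) / ((n:ℝ) - 2) * (1 - 2 / n) := by
      apply mul_le_mul_of_nonneg_left (by linarith) (by positivity)
    calc _ ≤ (n:ℝ) / ((n:ℝ) - 2) * (1 - 2 / n) := this
      _ = 1 := by field_simp
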